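/- Let G=(V,E) be a finite simple graph on n vertices with nonempty edge set, and γ ≥ n. Then every local minimizer of f(x) = -∑_v x_v + (γ/2) xᵀ A_G x - (1/2) xᵀ A_{G'} x over [0,1]^n is the indicator vector of a maximal independent set of G. -/
import Mathlib


open scoped Classical
open Finset Matrix

/-- The dataless quadratic network objective
`f(x) = -∑_v x_v + (γ/2) xᵀ A_G x - (1/2) xᵀ A_{Gᶜ} x`. -/
noncomputable def quantNetObj {n : ℕ} (G : SimpleGraph (Fin n)) (γ : ℝ) (x : Fin n → ℝ) : ℝ :=
  -(∑ v, x v) + γ / 2 * (x ⬝ᵥ ((G.adjMatrix ℝ) *ᵥ x)) - 1 / 2 * (x ⬝ᵥ ((Gᶜ.adjMatrix ℝ) *ᵥ x))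

lemma symm_swap {n : ℕ} (A : Matrix (Fin n) (Fin n) ℝ) (hA : Aᵀ = A) (x d : Fin n → ℝ) :
    x ⬝ᵥ (A *ᵥ d) = d ⬝ᵥ (A *ᵥ x) := by
  conv_lhs => rw [Matrix.dotProduct_mulVec, ← hA, Matrix.vecMul_transpose]
  rw [dotProduct_comm]

lemma quad_expand {n : ℕ} (A : Matrix (Fin n) (Fin n) ℝ) (hA : Aᵀ = A) (x d : Fin n → ℝ) :
    (x + d) ⬝ᵥ (A *ᵥ (x + d)) = x ⬝ᵥ (A *ᵥ x) + 2 * (d ⬝ᵥ (A *ᵥ x)) + d ⬝ᵥ (A *ᵥ d) := by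
  simp only [Matrix.mulVec_add, dotProduct_add, add_dotProduct]
  rw [symm_swap A hA x d]; ring

lemma quantNetObj_add {n : ℕ} (G : SimpleGraph (Fin n)) (γ : ℝ) (x d : Fin n → ℝ) :
    quantNetObj G γ (x + d) = quantNetObj G γ x
      + (-(∑ v, d v) + γ * (d ⬝ᵥ ((G.adjMatrix ℝ) *ᵥ x)) - d ⬝ᵥ ((Gᶜ.adjMatrix ℝ) *ᵥ x))
      + (γ / 2 * (d ⬝ᵥ ((G.adjMatrix ℝ) *ᵥ d)) - 1 / 2 * (d ⬝ᵥ ((Gᶜ.adjMatrix ℝ) *ᵥ d))) := by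
  unfold quantNetObj
  rw [quad_expand _ (SimpleGraph.transpose_adjMatrix (α := ℝ) G) x d,
      quad_expand _ (SimpleGraph.transpose_adjMatrix (α := ℝ) Gᶜ) x d]
  simp only [Pi.add_apply, Finset.sum_add_distrib]
  ring

lemma single_incr {n : ℕ} (G : SimpleGraph (Fin n)) (γ : ℝ) (x : Fin n → ℝ) (v : Fin n) (t : ℝ) :
    quantNetObj G γ (x + t • (Pi.single v 1 : Fin n → ℝ)) = quantNetObj G γ x
      + t * (-1 + γ * ((G.adjMatrix ℝ) *ᵥ x) v - ((Gᶜ.adjMatrix ℝ) *ᵥ x) v) := by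
  rw [quantNetObj_add]
  have h1 : ∑ w, (t • (Pi.single v 1 : Fin n → ℝ)) w = t := by
    simp [Pi.single_apply, mul_ite]
  have h2 : ∀ (w : Fin n → ℝ), (t • (Pi.single v 1 : Fin n → ℝ)) ⬝ᵥ w = t * w v := by
    intro w; simp [smul_dotProduct]
  have h3 : ∀ (H : SimpleGraph (Fin n)) (inst : DecidableRel H.Adj),
      (t • (Pi.single v 1 : Fin n → ℝ)) ⬝ᵥ ((H.adjMatrix ℝ) *ᵥ (t • (Pi.single v 1 : Fin n → ℝ))) = 0 := by
    intro H inst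
    rw [h2]
    simp only [Matrix.mulVec_smul, Pi.smul_apply, smul_eq_mul, SimpleGraph.adjMatrix_mulVec_apply]
    have hz : ∀ u ∈ H.neighborFinset v, t * (Pi.single v 1 : Fin n → ℝ) u = 0 := by
      intro u hu
      have hadj : H.Adj v u := by simpa using hu
      have hne : u ≠ v := hadj.ne'
      simp [Pi.single_eq_of_ne hne]
    rw [Finset.sum_eq_zero hz]
    simp
  rw [h1, h2, h2, h3, h3]
  ring

lemma pair_incr {n : ℕ} (G : SimpleGraph (Fin n)) (γ : ℝ) (x : Fin n → ℝ) {u v : Fin n}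
    (huv : G.Adj u v) (t : ℝ) :
    quantNetObj G γ (x + t • (Pi.single u 1 - Pi.single v 1 : Fin n → ℝ)) =
      quantNetObj G γ x
      + t * ((-1 + γ * ((G.adjMatrix ℝ) *ᵥ x) u - ((Gᶜ.adjMatrix ℝ) *ᵥ x) u)
           - (-1 + γ * ((G.adjMatrix ℝ) *ᵥ x) v - ((Gᶜ.adjMatrix ℝ) *ᵥ x) v))
      - γ * t ^ 2 := by
  classical
  set d0 : Fin n → ℝ := (Pi.single u 1 - Pi.single v 1 : Fin n → ℝ) with hd0
  rw [quantNetObj_add]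
  have hne : u ≠ v := huv.ne
  have hdv : ∀ (w : Fin n → ℝ), (t • d0) ⬝ᵥ w = t * (w u - w v) := by
    intro w
    simp only [hd0, smul_dotProduct, sub_dotProduct]
    simp [smul_eq_mul]
  have hsum : ∑ w, (t • d0) w = 0 := by
    simp only [hd0, Pi.smul_apply, Pi.sub_apply, smul_eq_mul]
    rw [← Finset.mul_sum]
    rw [Finset.sum_sub_distrib]
    simp [Finset.sum_pi_single]
  have hquad : ∀ (H : SimpleGraph (Fin n)) (inst : DecidableRel H.Adj),
      (t • d0) ⬝ᵥ ((H.adjMatrix ℝ) *ᵥ (t • d0)) =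
        t ^ 2 * (- (H.adjMatrix ℝ) u v - (H.adjMatrix ℝ) v u) := by
    intro H inst
    have h1 : ∀ w, ((H.adjMatrix ℝ) *ᵥ d0) w = H.adjMatrix ℝ w u - H.adjMatrix ℝ w v := by
      intro w; simp [hd0, Matrix.mulVec_sub, Matrix.mulVec_single]
    rw [hdv, Matrix.mulVec_smul]
    simp only [Pi.smul_apply, smul_eq_mul, h1]
    have huu : H.adjMatrix ℝ u u = 0 := by simp
    have hvv : H.adjMatrix ℝ v v = 0 := by simp
    rw [huu, hvv]; ring
  rw [hsum, hdv, hdv, hquad G _, hquad Gᶜ _]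
  have e1 : G.adjMatrix ℝ u v = 1 := by simp [huv]
  have e2 : G.adjMatrix ℝ v u = 1 := by simp [huv.symm]
  have e3 : Gᶜ.adjMatrix ℝ u v = 0 := by simp [SimpleGraph.compl_adj, huv]
  have e4 : Gᶜ.adjMatrix ℝ v u = 0 := by simp [SimpleGraph.compl_adj, huv.symm]
  rw [e1, e2, e3, e4]; ring

lemma exists_step {n : ℕ} {f : (Fin n → ℝ) → ℝ} {x : Fin n → ℝ}
    (hmin : IsLocalMinOn f (Set.Icc (0 : Fin n → ℝ) 1) x) (d : Fin n → ℝ) {t0 : ℝ} (ht0 : 0 < t0)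
    (hfeas : ∀ t : ℝ, 0 < t → t ≤ t0 → x + t • d ∈ Set.Icc (0 : Fin n → ℝ) 1) :
    ∃ t : ℝ, 0 < t ∧ t ≤ t0 ∧ f x ≤ f (x + t • d) := by
  obtain ⟨U, hUo, hxU, hUf⟩ := mem_nhdsWithin.mp hmin
  have hc : Continuous (fun t : ℝ => x + t • d) := by continuity
  have h0 : (fun t : ℝ => x + t • d) 0 = x := by simp
  have : (fun t : ℝ => x + t • d) ⁻¹' U ∈ nhds (0 : ℝ) :=
    hc.continuousAt.preimage_mem_nhds (by simpa using hUo.mem_nhds hxU)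
  obtain ⟨δ, hδ, hball⟩ := Metric.mem_nhds_iff.mp this
  refine ⟨min (δ / 2) t0, lt_min (by linarith) ht0, min_le_right _ _, ?_⟩
  have hmem : x + (min (δ / 2) t0) • d ∈ U := by
    apply hball
    simp only [Metric.mem_ball, Real.dist_eq, sub_zero]
    rw [abs_of_pos (lt_min (by linarith) ht0)]
    exact lt_of_le_of_lt (min_le_left _ _) (by linarith)
  exact hUf ⟨hmem, hfeas _ (lt_min (by linarith) ht0) (min_le_right _ _)⟩

lemma row_identity {n : ℕ} (G : SimpleGraph (Fin n)) (x : Fin n → ℝ) (v : Fin n) :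
    ((G.adjMatrix ℝ) *ᵥ x) v + ((Gᶜ.adjMatrix ℝ) *ᵥ x) v = (∑ w, x w) - x v := by
  classical
  have h1 : ∀ (w : Fin n), G.adjMatrix ℝ v w + Gᶜ.adjMatrix ℝ v w = if w = v then 0 else 1 := by
    intro w
    by_cases h : w = v
    · subst h; simp
    · by_cases hadj : G.Adj v w
      · simp [hadj, SimpleGraph.compl_adj, h]
      · have : Gᶜ.Adj v w := ⟨Ne.symm h, hadj⟩
        simp [hadj, this, h]
  have h2 : (((G.adjMatrix ℝ) *ᵥ x) v : ℝ) = ∑ w, G.adjMatrix ℝ v w * x w := by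
    simp [Matrix.mulVec, dotProduct]
  have h3 : (((Gᶜ.adjMatrix ℝ) *ᵥ x) v : ℝ) = ∑ w, Gᶜ.adjMatrix ℝ v w * x w := by
    simp [Matrix.mulVec, dotProduct]
  rw [h2, h3, ← Finset.sum_add_distrib]
  have : ∀ w : Fin n, G.adjMatrix ℝ v w * x w + Gᶜ.adjMatrix ℝ v w * x w
      = x w - (if w = v then x w else 0) := by
    intro w
    rw [← add_mul, h1 w]
    by_cases h : w = v <;> simp [h]
  rw [Finset.sum_congr rfl (fun w _ => this w), Finset.sum_sub_distrib]
  simp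


set_option maxHeartbeats 1000000 in
/-- for γ ≥ n (and G with at least one edge), every local minimizer of f
over [0,1]^n is the indicator vector of a maximal independent set of G. -/
theorem stmt7 {n : ℕ} (G : SimpleGraph (Fin n)) (hE : G.edgeSet.Nonempty)
    (γ : ℝ) (hγ : (n : ℝ) ≤ γ) (x : Fin n → ℝ)
    (hx : x ∈ Set.Icc (0 : Fin n → ℝ) 1)
    (hmin : IsLocalMinOn (quantNetObj G γ) (Set.Icc (0 : Fin n → ℝ) 1) x) :
    ∃ S : Finset (Fin n),
      (∀ u ∈ S, ∀ v ∈ S, ¬ G.Adj u v) ∧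
      (∀ v, v ∉ S → ∃ w ∈ S, G.Adj v w) ∧
      x = fun v => if v ∈ S then (1 : ℝ) else 0 := by
  classical
  obtain ⟨hxl, hxu⟩ := hx
  have hx0 : ∀ v, 0 ≤ x v := fun v => hxl v
  have hx1 : ∀ v, x v ≤ 1 := fun v => hxu v
  obtain ⟨a, b, hab⟩ : ∃ a b, G.Adj a b := by
    obtain ⟨e, he⟩ := hE
    induction e using Sym2.ind with
    | _ a b => exact ⟨a, b, he⟩
  have hnpos : 0 < n := a.pos
  have hn1 : (1 : ℝ) ≤ (n : ℝ) := by exact_mod_cast hnpos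
  have hγpos : (0 : ℝ) < γ := lt_of_lt_of_le (by linarith) hγ
  set S : ℝ := ∑ w, x w with hSdef
  have hS0 : 0 ≤ S := Finset.sum_nonneg fun i _ => hx0 i
  have hSn : S ≤ (n : ℝ) := by
    calc S ≤ ∑ _w : Fin n, (1 : ℝ) := Finset.sum_le_sum fun i _ => hx1 i
    _ = (n : ℝ) := by simp
  have hxS : ∀ v, x v ≤ S := fun v =>
    Finset.single_le_sum (fun i _ => hx0 i) (Finset.mem_univ v)
  -- sign conditions
  have h1 : ∀ v, x v < 1 →
      0 ≤ -1 + γ * ((G.adjMatrix ℝ) *ᵥ x) v - ((Gᶜ.adjMatrix ℝ) *ᵥ x) v := by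
    intro v hv
    have hfeas : ∀ t : ℝ, 0 < t → t ≤ 1 - x v →
        x + t • (Pi.single v 1 : Fin n → ℝ) ∈ Set.Icc (0 : Fin n → ℝ) 1 := by
      intro t htp htl
      constructor <;> intro w <;> by_cases hw : w = v
      · subst hw; simp only [Pi.add_apply, Pi.smul_apply, Pi.single_eq_same, smul_eq_mul,
          Pi.zero_apply]
        nlinarith [hx0 w]
      · simp [Pi.single_eq_of_ne hw, hx0 w]
      · subst hw; simp only [Pi.add_apply, Pi.smul_apply, Pi.single_eq_same, smul_eq_mul,
          Pi.one_apply]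
        nlinarith
      · simp [Pi.single_eq_of_ne hw, hx1 w]
    obtain ⟨t, ht, ht0, hle⟩ := exists_step hmin (Pi.single v 1)
      (show (0:ℝ) < 1 - x v by linarith) hfeas
    rw [single_incr] at hle
    nlinarith
  have h2 : ∀ v, 0 < x v →
      -1 + γ * ((G.adjMatrix ℝ) *ᵥ x) v - ((Gᶜ.adjMatrix ℝ) *ᵥ x) v ≤ 0 := by
    intro v hv
    have hfeas : ∀ t : ℝ, 0 < t → t ≤ x v →
        x + t • (-(Pi.single v 1) : Fin n → ℝ) ∈ Set.Icc (0 : Fin n → ℝ) 1 := by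
      intro t htp htl
      constructor <;> intro w <;> by_cases hw : w = v
      · subst hw; simp only [Pi.add_apply, Pi.smul_apply, Pi.neg_apply, Pi.single_eq_same,
          smul_eq_mul, Pi.zero_apply]
        nlinarith
      · simp [Pi.single_eq_of_ne hw, hx0 w]
      · subst hw; simp only [Pi.add_apply, Pi.smul_apply, Pi.neg_apply, Pi.single_eq_same,
          smul_eq_mul, Pi.one_apply]
        nlinarith [hx1 w]
      · simp [Pi.single_eq_of_ne hw, hx1 w]
    obtain ⟨t, ht, ht0, hle⟩ := exists_step hmin (-(Pi.single v 1))
      (show (0:ℝ) < x v from hv) hfeas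
    have heq : x + t • (-(Pi.single v 1) : Fin n → ℝ) = x + (-t) • (Pi.single v 1 : Fin n → ℝ) := by
      rw [neg_smul, smul_neg]
    rw [heq, single_incr] at hle
    nlinarith
  -- x is binary
  have hbin : ∀ v, x v = 0 ∨ x v = 1 := by
    intro v
    by_contra hcon
    push_neg at hcon
    have hv0 : 0 < x v := lt_of_le_of_ne (hx0 v) (Ne.symm hcon.1)
    have hv1 : x v < 1 := lt_of_le_of_ne (hx1 v) hcon.2
    have hg0 : -1 + γ * ((G.adjMatrix ℝ) *ᵥ x) v - ((Gᶜ.adjMatrix ℝ) *ᵥ x) v = 0 :=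
      le_antisymm (h2 v hv0) (h1 v hv1)
    have hrow := row_identity G x v
    have key : (γ + 1) * ((G.adjMatrix ℝ) *ᵥ x) v = 1 + S - x v := by linarith
    have hAvpos : 0 < ((G.adjMatrix ℝ) *ᵥ x) v := by nlinarith [hxS v]
    have hAv : ((G.adjMatrix ℝ) *ᵥ x) v = ∑ u ∈ G.neighborFinset v, x u := by
      simp
    obtain ⟨u, hu, hxupos⟩ : ∃ u ∈ G.neighborFinset v, 0 < x u := by
      by_contra hall
      push_neg at hall
      have : ((G.adjMatrix ℝ) *ᵥ x) v ≤ 0 := by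
        rw [hAv]; exact Finset.sum_nonpos fun i hi => hall i hi
      linarith
    have hub : x u ≤ ((G.adjMatrix ℝ) *ᵥ x) v := by
      rw [hAv]; exact Finset.single_le_sum (fun i _ => hx0 i) hu
    have hAvlt1 : ((G.adjMatrix ℝ) *ᵥ x) v < 1 := by
      by_contra hge
      push_neg at hge
      have : γ + 1 ≤ (γ + 1) * ((G.adjMatrix ℝ) *ᵥ x) v := by nlinarith
      linarith
    have hxu1 : x u < 1 := lt_of_le_of_lt hub hAvlt1
    have hadjvu : G.Adj v u := by simpa using hu
    have hadjuv : G.Adj u v := hadjvu.symm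
    have hne : u ≠ v := hadjuv.ne
    have hfeas : ∀ t : ℝ, 0 < t → t ≤ min (x v) (1 - x u) →
        x + t • ((Pi.single u 1 - Pi.single v 1) : Fin n → ℝ) ∈ Set.Icc (0 : Fin n → ℝ) 1 := by
      intro t htp htl
      have htv : t ≤ x v := le_trans htl (min_le_left _ _)
      have htu : t ≤ 1 - x u := le_trans htl (min_le_right _ _)
      constructor <;> intro w
      · by_cases hwu : w = u
        · subst hwu
          simp only [Pi.add_apply, Pi.smul_apply, Pi.sub_apply, Pi.single_eq_same,
            Pi.single_eq_of_ne hne, smul_eq_mul, Pi.zero_apply]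
          nlinarith [hx0 w]
        · by_cases hwv : w = v
          · subst hwv
            simp only [Pi.add_apply, Pi.smul_apply, Pi.sub_apply, Pi.single_eq_same,
              Pi.single_eq_of_ne (Ne.symm hne), smul_eq_mul, Pi.zero_apply]
            nlinarith
          · simp [Pi.single_eq_of_ne hwu, Pi.single_eq_of_ne hwv, hx0 w]
      · by_cases hwu : w = u
        · subst hwu
          simp only [Pi.add_apply, Pi.smul_apply, Pi.sub_apply, Pi.single_eq_same,
            Pi.single_eq_of_ne hne, smul_eq_mul, Pi.one_apply]
          nlinarith
        · by_cases hwv : w = v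
          · subst hwv
            simp only [Pi.add_apply, Pi.smul_apply, Pi.sub_apply, Pi.single_eq_same,
              Pi.single_eq_of_ne (Ne.symm hne), smul_eq_mul, Pi.one_apply]
            nlinarith [hx1 w]
          · simp [Pi.single_eq_of_ne hwu, Pi.single_eq_of_ne hwv, hx1 w]
    obtain ⟨t, ht, ht0, hle⟩ := exists_step hmin (Pi.single u 1 - Pi.single v 1)
      (show (0:ℝ) < min (x v) (1 - x u) from lt_min hv0 (by linarith)) hfeas
    rw [pair_incr G γ x hadjuv] at hle
    have hgu := h2 u hxupos
    nlinarith [mul_pos ht ht, mul_nonneg ht.le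
      (neg_nonneg.mpr hgu), mul_pos hγpos (mul_pos ht ht)]
  -- construct the set
  refine ⟨Finset.univ.filter (fun v => x v = 1), ?_, ?_, ?_⟩
  · intro u hu v hv hadj
    have hxu : x u = 1 := (Finset.mem_filter.mp hu).2
    have hxv : x v = 1 := (Finset.mem_filter.mp hv).2
    have hgv := h2 v (by rw [hxv]; norm_num)
    have hrow := row_identity G x v
    have hub : (1:ℝ) ≤ ((G.adjMatrix ℝ) *ᵥ x) v := by
      have hAv : ((G.adjMatrix ℝ) *ᵥ x) v = ∑ w ∈ G.neighborFinset v, x w := by simp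
      have hmem : u ∈ G.neighborFinset v := by simpa using hadj.symm
      calc (1:ℝ) = x u := hxu.symm
      _ ≤ ∑ w ∈ G.neighborFinset v, x w := Finset.single_le_sum (fun i _ => hx0 i) hmem
      _ = _ := hAv.symm
    have hmul : γ * 1 ≤ γ * ((G.adjMatrix ℝ) *ᵥ x) v :=
      mul_le_mul_of_nonneg_left hub hγpos.le
    linarith
  · intro v hv
    have hxv0 : x v = 0 := by
      rcases hbin v with h | h
      · exact h
      · exact absurd (Finset.mem_filter.mpr ⟨Finset.mem_univ v, h⟩) hv
    by_contra hno
    push_neg at hno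
    have hgv := h1 v (by rw [hxv0]; norm_num)
    have hrow := row_identity G x v
    have hAv0 : ((G.adjMatrix ℝ) *ᵥ x) v = 0 := by
      have hAv : ((G.adjMatrix ℝ) *ᵥ x) v = ∑ w ∈ G.neighborFinset v, x w := by simp
      rw [hAv]
      apply Finset.sum_eq_zero
      intro w hw
      have hadj : G.Adj v w := by simpa using hw
      rcases hbin w with h | h
      · exact h
      · exact absurd hadj (hno w (Finset.mem_filter.mpr ⟨Finset.mem_univ w, h⟩))
    rw [hAv0] at hgv hrow
    linarith
  · funext v
    by_cases hv : v ∈ Finset.univ.filter (fun v => x v = 1)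
    · simp only [hv, if_true]
      exact (Finset.mem_filter.mp hv).2
    · simp only [hv, if_false]
      rcases hbin v with h | h
      · exact h
      · exact absurd (Finset.mem_filter.mpr ⟨Finset.mem_univ v, h⟩) hv
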